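/- For the group-similarity corrupted affinity matrix W̃, the value (N_i w_i + Σ_{j≠i} N_j w̃_{i,j})/d̃_i is a generalized eigenvalue of the pair (L̃, D̃) with geometric multiplicity at least N_i − 1; that is, the kernel of L̃ − ((N_i w_i + Σ_{j≠i} N_j w̃_{i,j})/d̃_i) D̃ has dimension at least N_i − 1. -/

import Mathlib

set_option maxHeartbeats 1000000


/-- For the group-similarity corrupted affinity matrix `W̃`, the value
`(n i * w i + ∑_{j ≠ i} n j * w̃ i j) / d̃ i` is a generalized eigenvalue of the pair
`(L̃, D̃)` with geometric multiplicity at least `n i - 1`. -/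
theorem groupSim_generalized_eigenvalue_block_i
    (K : ℕ) (hK : 2 ≤ K)
    (n : Fin K → ℕ) (hn : ∀ i, 2 ≤ n i)
    (w : Fin K → ℝ) (hw : ∀ i, 0 < w i)
    (N : ℕ) (hN : N = ∑ i, n i)
    (β : Fin N → Fin K)
    (hβ : ∀ m : Fin N,
      (∑ k ∈ Finset.univ.filter (fun k => k < β m), n k) ≤ m.val ∧
      m.val < (∑ k ∈ Finset.univ.filter (fun k => k < β m), n k) + n (β m))
    (W : Matrix (Fin N) (Fin N) ℝ)
    (hW : ∀ m p, W m p = if m ≠ p ∧ β m = β p then w (β m) else 0)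
    (i : Fin K)
    (wt : Fin K → ℝ) (hwt : ∀ j, j ≠ i → 0 < wt j)
    (Wt : Matrix (Fin N) (Fin N) ℝ)
    (hWt : ∀ m p, Wt m p =
      if β m = β p then W m p
      else if β m = i then wt (β p)
      else if β p = i then wt (β m)
      else 0)
    (Dt : Matrix (Fin N) (Fin N) ℝ)
    (hDt : Dt = Matrix.diagonal (fun m => ∑ p, Wt m p))
    (Lt : Matrix (Fin N) (Fin N) ℝ)
    (hLt : Lt = Dt - Wt)
    (dt : Fin K → ℝ)
    (hdtj : ∀ j, j ≠ i → dt j = ((n j : ℝ) - 1) * w j + (n i : ℝ) * wt j)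
    (hdti : dt i = ((n i : ℝ) - 1) * w i + ∑ j ∈ Finset.univ.erase i, (n j : ℝ) * wt j) :
    n i - 1 ≤
      Module.finrank ℝ
        ↥(LinearMap.ker
          (Matrix.toLin'
            (Lt -
              (((n i : ℝ) * w i + ∑ j ∈ Finset.univ.erase i, (n j : ℝ) * wt j) / dt i)
                • Dt))) := by
  classical
  set S : ℝ := ∑ j ∈ Finset.univ.erase i, (n j : ℝ) * wt j with hS
  set lam : ℝ := ((n i : ℝ) * w i + S) / dt i with hlam
  set A : Matrix (Fin N) (Fin N) ℝ := Lt - lam • Dt with hA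
  -- fibers of β
  set F : Fin K → Finset (Fin N) := fun j => Finset.univ.filter (fun m => β m = j) with hF
  -- each fiber has cardinality at most n j
  have hle : ∀ j, (F j).card ≤ n j := by
    intro j
    have hsub : ∀ m ∈ F j, m.val ∈ Finset.Ico
        (∑ k ∈ Finset.univ.filter (fun k => k < j), n k)
        ((∑ k ∈ Finset.univ.filter (fun k => k < j), n k) + n j) := by
      intro m hm
      have hmj : β m = j := by simpa [hF] using hm
      have := hβ m
      rw [hmj] at this
      simpa [Finset.mem_Ico] using this
    have hinj : Set.InjOn (fun m : Fin N => m.val) (F j) := fun a _ b _ h => Fin.val_injective h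
    have := Finset.card_le_card_of_injOn _ hsub hinj
    simpa using this
  -- the fiber cardinalities sum to N
  have hsum : ∑ j, (F j).card = N := by
    have := Finset.card_eq_sum_card_fiberwise
      (f := β) (s := (Finset.univ : Finset (Fin N))) (t := Finset.univ)
      (fun m _ => Finset.mem_univ (β m))
    simpa [hF] using this.symm
  -- hence each fiber has cardinality exactly n j
  have hcard : ∀ j, (F j).card = n j := by
    intro j
    by_contra h
    have hlt : (F j).card < n j := lt_of_le_of_ne (hle j) h
    have : ∑ k, (F k).card < ∑ k, n k :=
      Finset.sum_lt_sum (fun k _ => hle k) ⟨j, Finset.mem_univ j, hlt⟩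
    rw [hsum, ← hN] at this
    exact lt_irrefl _ this
  -- row sums for rows in fiber i
  have hrow : ∀ m : Fin N, β m = i → (∑ p, Wt m p) = dt i := by
    intro m hm
    have hmF : m ∈ F i := by simp [hF, hm]
    have hsplit : ∑ j, ∑ p ∈ F j, Wt m p = ∑ p, Wt m p := by
      simpa [hF] using Finset.sum_fiberwise (Finset.univ : Finset (Fin N)) β (fun p => Wt m p)
    rw [← hsplit]
    have hinner : ∀ j, (∑ p ∈ F j, Wt m p) =
        if j = i then ((n i : ℝ) - 1) * w i else (n j : ℝ) * wt j := by
      intro j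
      by_cases hji : j = i
      · subst hji
        rw [← Finset.insert_erase hmF, Finset.sum_insert (Finset.notMem_erase m _)]
        have h1 : Wt m m = 0 := by simp [hWt, hW]
        have h2 : ∀ p ∈ (F j).erase m, Wt m p = w j := by
          intro p hp
          have hpne : p ≠ m := Finset.ne_of_mem_erase hp
          have hpF : β p = j := by
            have := Finset.mem_of_mem_erase hp; simpa [hF] using this
          rw [hWt, hW]
          simp [hm, hpF, hpne.symm]
        rw [h1, Finset.sum_congr rfl h2, Finset.sum_const, Finset.card_erase_of_mem hmF,
          hcard]
        have h2n : 1 ≤ n j := le_trans (by norm_num) (hn j)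
        simp only [if_pos rfl, nsmul_eq_mul, Nat.cast_sub h2n]
        push_cast
        ring
      · have h2 : ∀ p ∈ F j, Wt m p = wt j := by
          intro p hp
          have hpF : β p = j := by simpa [hF] using hp
          rw [hWt]
          have : β m ≠ β p := by rw [hm, hpF]; exact fun h => hji h.symm
          simp [this, hm, hpF, (show i ≠ j from fun h => hji h.symm)]
        rw [Finset.sum_congr rfl h2, Finset.sum_const, hcard]
        simp [hji]
    rw [Finset.sum_congr rfl (fun j _ => hinner j)]
    rw [← Finset.add_sum_erase _
      (fun j => if j = i then ((n i : ℝ) - 1) * w i else (n j : ℝ) * wt j)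
      (Finset.mem_univ i), hdti]
    simp only [if_pos rfl]
    congr 1
    refine Finset.sum_congr rfl (fun j hj => ?_)
    rw [if_neg (Finset.ne_of_mem_erase hj)]
  -- positivity of dt i
  have hSnn : 0 ≤ S := by
    refine Finset.sum_nonneg (fun j hj => ?_)
    have := hwt j (Finset.ne_of_mem_erase hj)
    positivity
  have hdtpos : 0 < dt i := by
    have h1 : (2:ℝ) ≤ (n i : ℝ) := by exact_mod_cast hn i
    have := hw i
    rw [hdti]
    nlinarith [hSnn]
  have hlamdt : lam * dt i = (n i : ℝ) * w i + S :=
    div_mul_cancel₀ _ (ne_of_gt hdtpos)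
  -- entries of A
  have hAentry : ∀ p q, A p q = (if p = q then (1 - lam) * (∑ r, Wt p r) else 0) - Wt p q := by
    intro p q
    simp only [hA, hLt, hDt, Matrix.sub_apply, Matrix.smul_apply, Matrix.diagonal_apply,
      smul_eq_mul]
    by_cases h : p = q <;> simp [h] <;> ring
  -- columns of A indexed by block i are all equal
  have hcol : ∀ m m0 : Fin N, β m = i → β m0 = i → m ≠ m0 → ∀ p, A p m = A p m0 := by
    intro m m0 hm hm0 hne p
    have key : ∀ q : Fin N, β q = i → p ≠ q → A p q = - Wt p q := by
      intro q hq hpq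
      rw [hAentry, if_neg hpq]; ring
    have keyd : ∀ q : Fin N, β q = i → p = q → A p q = - w i := by
      intro q hq hpq
      subst hpq
      rw [hAentry, if_pos rfl, hrow p hq]
      have : Wt p p = 0 := by simp [hWt, hW]
      rw [this, sub_zero, hdti]
      have : lam * dt i = (n i : ℝ) * w i + S := hlamdt
      rw [hdti] at this
      nlinarith [this]
    have hWval : ∀ q : Fin N, β q = i → p ≠ q → Wt p q = (if β p = i then w i else wt (β p)) := by
      intro q hq hpq
      by_cases hpi : β p = i
      · rw [hWt, if_pos (by rw [hpi, hq]), hW, if_pos ⟨hpq, by rw [hpi, hq]⟩, if_pos hpi, hpi]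
      · rw [hWt, if_neg (by rw [hq]; exact hpi), if_neg hpi, if_pos hq, if_neg hpi]
    by_cases h1 : p = m
    · -- p = m, so p ≠ m0
      have h2 : p ≠ m0 := by rw [h1]; exact hne
      rw [keyd m hm h1, key m0 hm0 h2, hWval m0 hm0 h2]
      rw [h1, hm]
      simp
    · by_cases h2 : p = m0
      · rw [keyd m0 hm0 h2, key m hm h1, hWval m hm h1]
        rw [h2, hm0]
        simp
      · rw [key m hm h1, key m0 hm0 h2, hWval m hm h1, hWval m0 hm0 h2]
  -- a base point in block i
  have hFpos : 0 < (F i).card := by rw [hcard]; have := hn i; omega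
  obtain ⟨m0, hm0F⟩ := Finset.card_pos.mp hFpos
  have hm0 : β m0 = i := by simpa [hF] using hm0F
  -- the independent family
  set ι := ↥((F i).erase m0) with hι
  have hmem : ∀ m : ι, β m.1 = i ∧ m.1 ≠ m0 := by
    intro m
    have h1 := Finset.mem_of_mem_erase m.2
    have h2 := Finset.ne_of_mem_erase m.2
    exact ⟨by simpa [hF] using h1, h2⟩
  have hker : ∀ m : ι,
      (Pi.single m.1 (1:ℝ) - Pi.single m0 1) ∈ LinearMap.ker (Matrix.toLin' A) := by
    intro m
    rw [LinearMap.mem_ker, Matrix.toLin'_apply]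
    ext p
    have := hcol m.1 m0 (hmem m).1 hm0 (hmem m).2 p
    simp [Matrix.mulVec_sub, Matrix.mulVec_single, this]
  set f : ι → ↥(LinearMap.ker (Matrix.toLin' A)) :=
    fun m => ⟨Pi.single m.1 (1:ℝ) - Pi.single m0 1, hker m⟩ with hf
  have hli : LinearIndependent ℝ
      (fun m : ι => (Pi.single m.1 (1:ℝ) - Pi.single m0 1 : Fin N → ℝ)) := by
    rw [Fintype.linearIndependent_iff]
    intro g hg m
    have hm1 : m.1 ≠ m0 := (hmem m).2
    have hform : ∀ k : ι,
        g k • ((Pi.single k.1 (1:ℝ) - Pi.single m0 1 : Fin N → ℝ) m.1)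
          = if k = m then g k else 0 := by
      intro k
      by_cases hk : k = m
      · subst hk; simp [Pi.single_apply, if_neg hm1]
      · have hne : (m.1 : Fin N) ≠ k.1 := fun h => hk (Subtype.ext h.symm)
        simp [Pi.single_apply, if_neg hm1, hk, hne]
    have hthis := congrFun hg m.1
    simp only [Finset.sum_apply, Pi.smul_apply, Pi.zero_apply] at hthis
    rw [Finset.sum_congr rfl (fun k _ => hform k)] at hthis
    rw [Fintype.sum_eq_single m (fun k hk => if_neg hk), if_pos rfl] at hthis
    exact hthis
  have hli2 : LinearIndependent ℝ f :=
    LinearIndependent.of_comp (LinearMap.ker (Matrix.toLin' A)).subtype hli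
  have hfin := hli2.fintype_card_le_finrank
  have hcardι : Fintype.card ι = n i - 1 := by
    rw [Fintype.card_coe, Finset.card_erase_of_mem hm0F, hcard]
  rw [hcardι] at hfin
  exact hfin
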